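/- Let f(x,t) = t^{b-1}(1-t)^{c-b-1}(1-xt)^{-a}. Then Gauss's hypergeometric operator applied to f equals a total t-derivative of (t-1) f_x: (−x²+x) f_xx + ((−a−b−1)x + c) f_x − a b f = ∂_t( (t−1) f_x ), for 0 < t < 1 and xt < 1. -/

import Mathlib

/-- `f(x,t) = t^(b-1) (1-t)^(c-b-1) (1-xt)^(-a)` (real powers). -/
noncomputable def f7 (a b c x t : ℝ) : ℝ :=
  t ^ (b - 1) * (1 - t) ^ (c - b - 1) * (1 - x * t) ^ (-a)

lemma fx_has (a b c : ℝ) {x t : ℝ} (ht0 : 0 < t) (hxt : x * t < 1) :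
    HasDerivAt (fun z => f7 a b c z t)
      (t ^ (b - 1) * (1 - t) ^ (c - b - 1) * (a * t * (1 - x * t) ^ (-a - 1))) x := by
  have hu : (0:ℝ) < 1 - x * t := by linarith
  have h1 : HasDerivAt (fun z : ℝ => 1 - z * t) (-t) x := by
    simpa using ((hasDerivAt_id x).mul_const t).const_sub 1
  have h2 : HasDerivAt (fun z : ℝ => (1 - z * t) ^ (-a))
      ((-a) * (1 - x * t) ^ (-a - 1) * (-t)) x := by
    simpa [Function.comp_def] using
      (Real.hasDerivAt_rpow_const (x := 1 - x * t) (p := -a) (Or.inl hu.ne')).comp x h1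
  have h3 := h2.const_mul (t ^ (b - 1) * (1 - t) ^ (c - b - 1))
  have h4 : (fun z => f7 a b c z t)
      = fun z => (t ^ (b - 1) * (1 - t) ^ (c - b - 1)) * (1 - z * t) ^ (-a) := by
    funext z; unfold f7; ring
  rw [h4]
  exact h3.congr_deriv (by ring)

lemma fxx_has (a b c : ℝ) {x t : ℝ} (hxt : x * t < 1) :
    HasDerivAt (fun y => t ^ (b - 1) * (1 - t) ^ (c - b - 1) * (a * t * (1 - y * t) ^ (-a - 1)))
      (t ^ (b - 1) * (1 - t) ^ (c - b - 1) * (a * (a + 1) * t ^ 2 * (1 - x * t) ^ (-a - 2))) x := by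
  have hu : (0:ℝ) < 1 - x * t := by linarith
  have h1 : HasDerivAt (fun z : ℝ => 1 - z * t) (-t) x := by
    simpa using ((hasDerivAt_id x).mul_const t).const_sub 1
  have h2 : HasDerivAt (fun z : ℝ => (1 - z * t) ^ (-a - 1))
      ((-a - 1) * (1 - x * t) ^ (-a - 1 - 1) * (-t)) x := by
    simpa [Function.comp_def] using
      (Real.hasDerivAt_rpow_const (x := 1 - x * t) (p := -a - 1) (Or.inl hu.ne')).comp x h1
  have h3 := h2.const_mul (t ^ (b - 1) * (1 - t) ^ (c - b - 1) * (a * t))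
  have h4 : (fun y : ℝ => t ^ (b - 1) * (1 - t) ^ (c - b - 1) * (a * t * (1 - y * t) ^ (-a - 1)))
      = fun y => (t ^ (b - 1) * (1 - t) ^ (c - b - 1) * (a * t)) * (1 - y * t) ^ (-a - 1) := by
    funext y; ring
  rw [h4]
  have he : (-a - 1 - 1 : ℝ) = -a - 2 := by ring
  rw [he] at h2
  exact (h2.const_mul (t ^ (b - 1) * (1 - t) ^ (c - b - 1) * (a * t))).congr_deriv (by ring)

lemma g_has (a b c x : ℝ) {t : ℝ} (ht0 : 0 < t) (ht1 : t < 1) (hxt : x * t < 1) :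
    HasDerivAt (fun s => -(a * (s ^ b * ((1 - s) ^ (c - b) * (1 - x * s) ^ (-a - 1)))))
      (-(a * (b * t ^ (b - 1) * ((1 - t) ^ (c - b) * (1 - x * t) ^ (-a - 1))
        + t ^ b * (((c - b) * (1 - t) ^ (c - b - 1) * (-1)) * (1 - x * t) ^ (-a - 1)
          + (1 - t) ^ (c - b) * ((-a - 1) * (1 - x * t) ^ (-a - 2) * (-x)))))) t := by
  have hu : (0:ℝ) < 1 - x * t := by linarith
  have h1t : (0:ℝ) < 1 - t := by linarith
  have hA : HasDerivAt (fun s : ℝ => s ^ b) (b * t ^ (b - 1)) t :=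
    Real.hasDerivAt_rpow_const (Or.inl ht0.ne')
  have hB : HasDerivAt (fun s : ℝ => (1 - s) ^ (c - b))
      ((c - b) * (1 - t) ^ (c - b - 1) * (-1)) t := by
    have hs : HasDerivAt (fun s : ℝ => 1 - s) (-1 : ℝ) t := by
      simpa using (hasDerivAt_id t).const_sub 1
    simpa [Function.comp_def] using
      (Real.hasDerivAt_rpow_const (x := 1 - t) (p := c - b) (Or.inl h1t.ne')).comp t hs
  have hC : HasDerivAt (fun s : ℝ => (1 - x * s) ^ (-a - 1))
      ((-a - 1) * (1 - x * t) ^ (-a - 2) * (-x)) t := by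
    have hs : HasDerivAt (fun s : ℝ => 1 - x * s) (-x : ℝ) t := by
      simpa using ((hasDerivAt_id t).const_mul x).const_sub 1
    have := (Real.hasDerivAt_rpow_const (x := 1 - x * t) (p := -a - 1)
      (Or.inl hu.ne')).comp t hs
    have he : (-a - 1 - 1 : ℝ) = -a - 2 := by ring
    simpa [he, Function.comp_def] using this
  exact ((hA.mul (hB.mul hC)).const_mul a).neg

theorem stmt7 (a b c x t : ℝ) (ht0 : 0 < t) (ht1 : t < 1) (hxt : x * t < 1) :
    (-x ^ 2 + x) * deriv (fun y => deriv (fun z => f7 a b c z t) y) x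
      + ((-a - b - 1) * x + c) * deriv (fun y => f7 a b c y t) x
      - a * b * f7 a b c x t
      = deriv (fun s => (s - 1) * deriv (fun y => f7 a b c y s) x) t := by
  have h1t : (0:ℝ) < 1 - t := by linarith
  have hu : (0:ℝ) < 1 - x * t := by linarith
  have hopen : IsOpen {y : ℝ | y * t < 1} :=
    isOpen_lt (continuous_id.mul continuous_const) continuous_const
  have hev : (fun y => deriv (fun z => f7 a b c z t) y) =ᶠ[nhds x]
      (fun y => t ^ (b - 1) * (1 - t) ^ (c - b - 1) * (a * t * (1 - y * t) ^ (-a - 1))) := by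
    filter_upwards [hopen.mem_nhds hxt] with y hy
    exact (fx_has a b c ht0 hy).deriv
  rw [hev.deriv_eq, (fxx_has a b c hxt).deriv, (fx_has a b c ht0 hxt).deriv]
  have hopen2 : IsOpen {s : ℝ | 0 < s ∧ s < 1 ∧ x * s < 1} := by
    have h1 : IsOpen {s : ℝ | 0 < s} := isOpen_lt continuous_const continuous_id
    have h2 : IsOpen {s : ℝ | s < 1} := isOpen_lt continuous_id continuous_const
    have h3 : IsOpen {s : ℝ | x * s < 1} :=
      isOpen_lt (continuous_const.mul continuous_id) continuous_const
    exact (h1.inter (h2.inter h3))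
  have hev2 : (fun s => (s - 1) * deriv (fun y => f7 a b c y s) x) =ᶠ[nhds t]
      (fun s => -(a * (s ^ b * ((1 - s) ^ (c - b) * (1 - x * s) ^ (-a - 1))))) := by
    filter_upwards [hopen2.mem_nhds ⟨ht0, ht1, hxt⟩] with s hs
    obtain ⟨hs0, hs1, hxs⟩ := hs
    rw [(fx_has a b c hs0 hxs).deriv]
    have e1 : s ^ b = s ^ (b - 1) * s := by
      rw [← Real.rpow_add_one hs0.ne']; ring_nf
    have e2 : (1 - s) ^ (c - b) = (1 - s) ^ (c - b - 1) * (1 - s) := by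
      rw [← Real.rpow_add_one (by linarith : (1:ℝ) - s ≠ 0)]; ring_nf
    rw [e1, e2]; ring
  rw [hev2.deriv_eq, (g_has a b c x ht0 ht1 hxt).deriv]
  have e1 : (1 - x * t) ^ (-a - 1) = (1 - x * t) ^ (-a - 2) * (1 - x * t) := by
    rw [← Real.rpow_add_one hu.ne']; ring_nf
  have e2 : (1 - x * t) ^ (-a) = (1 - x * t) ^ (-a - 1) * (1 - x * t) := by
    rw [← Real.rpow_add_one hu.ne']; ring_nf
  have e3 : t ^ b = t ^ (b - 1) * t := by
    rw [← Real.rpow_add_one ht0.ne']; ring_nf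
  have e4 : (1 - t) ^ (c - b) = (1 - t) ^ (c - b - 1) * (1 - t) := by
    rw [← Real.rpow_add_one h1t.ne']; ring_nf
  unfold f7
  rw [e3, e4, e2, e1]
  ring
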